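/- arXiv:1004.2437 — 2 statements merged into one kernel-verified Lean document; each statement's English description precedes it below -/
import Mathlib

section
/- ∫₀¹ log(x)/(x²+x+1) dx = 4π²/27 - (2/9)ψ'(1/3). -/
open Real MeasureTheory intervalIntegral Filter Topology Set


lemma myF_deriv (n : ℕ) {x : ℝ} (hx : x ∈ Set.Ioo (0:ℝ) 1) :
    HasDerivAt (fun x : ℝ => Real.log x * x ^ (n+1) / (n+1) - x ^ (n+1) / ((n:ℝ)+1)^2)
      (x ^ n * Real.log x) x := by
  have hp : HasDerivAt (fun x : ℝ => x ^ (n+1)) (((n:ℝ)+1) * x ^ n) x := by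
    simpa using hasDerivAt_pow (n+1) x
  have h1 : HasDerivAt (fun x : ℝ => Real.log x * x ^ (n+1))
      (x⁻¹ * x ^ (n+1) + Real.log x * (((n:ℝ)+1) * x ^ n)) x :=
    (Real.hasDerivAt_log hx.1.ne').mul hp
  have h2 := (h1.div_const ((n:ℝ)+1)).sub (hp.div_const (((n:ℝ)+1)^2))
  convert h2 using 1
  · rfl
  · rfl
  · rfl
  have hx0 : x ≠ 0 := hx.1.ne'
  have hn : ((n:ℝ)+1) ≠ 0 := by positivity
  field_simp
  ring

lemma myF_cont (n : ℕ) :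
    ContinuousOn (fun x : ℝ => Real.log x * x ^ (n+1) / (n+1) - x ^ (n+1) / ((n:ℝ)+1)^2)
      (Set.Icc 0 1) := by
  intro x hx
  rcases eq_or_ne x 0 with rfl | hx0
  · have key : Tendsto (fun x : ℝ => Real.log x * x ^ (n+1)) (𝓝[>] (0:ℝ)) (𝓝 0) := by
      have h := tendsto_log_mul_rpow_nhdsGT_zero (r := (n:ℝ)+1) (by positivity)
      refine h.congr' ?_
      filter_upwards [self_mem_nhdsWithin] with y hy
      rw [show ((n:ℝ)+1) = ((n+1 : ℕ) : ℝ) by push_cast; ring, Real.rpow_natCast]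
    have key2 : Tendsto (fun x : ℝ => Real.log x * x ^ (n+1) / (n+1) - x ^ (n+1) / ((n:ℝ)+1)^2)
        (𝓝[>] (0:ℝ)) (𝓝 0) := by
      have h2 : Tendsto (fun x : ℝ => x ^ (n+1)) (𝓝[>] (0:ℝ)) (𝓝 0) := by
        have := ((continuous_pow (n+1)).tendsto (0:ℝ)).mono_left (nhdsWithin_le_nhds (s := Set.Ioi 0))
        simpa using this
      have := (key.div_const ((n:ℝ)+1)).sub (h2.div_const (((n:ℝ)+1)^2))
      simpa using this
    have hsub : Set.Icc (0:ℝ) 1 ⊆ insert 0 (Set.Ioi 0) := by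
      intro y hy
      rcases eq_or_lt_of_le hy.1 with h | h
      · exact Or.inl h.symm
      · exact Or.inr h
    have : Tendsto (fun x : ℝ => Real.log x * x ^ (n+1) / (n+1) - x ^ (n+1) / ((n:ℝ)+1)^2)
        (𝓝[Set.Icc 0 1] (0:ℝ)) (𝓝 0) := by
      refine Tendsto.mono_left ?_ (nhdsWithin_mono 0 hsub)
      rw [nhdsWithin_insert, tendsto_sup]
      constructor
      · have := tendsto_pure_nhds
          (fun x : ℝ => Real.log x * x ^ (n+1) / (n+1) - x ^ (n+1) / ((n:ℝ)+1)^2) 0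
        norm_num at this ⊢
        exact this
      · exact key2
    unfold ContinuousWithinAt
    simpa using this
  · have hc : ContinuousAt (fun x : ℝ => Real.log x * x ^ (n+1) / (n+1) - x ^ (n+1) / ((n:ℝ)+1)^2) x := by
      have hlog : ContinuousAt Real.log x := Real.continuousAt_log hx0
      fun_prop (disch := assumption)
    exact hc.continuousWithinAt

lemma pow_mul_log_intInt (n : ℕ) :
    IntervalIntegrable (fun x : ℝ => x ^ n * Real.log x) volume 0 1 := by
  have h := intervalIntegrable_deriv_of_nonneg (a := (0:ℝ)) (b := 1)
      (g := fun x : ℝ => -(Real.log x * x ^ (n+1) / (n+1) - x ^ (n+1) / ((n:ℝ)+1)^2))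
      (g' := fun x : ℝ => -(x ^ n * Real.log x))
      (by rw [Set.uIcc_of_le (zero_le_one (α := ℝ))]; exact (myF_cont n).neg)
      (by
        intro x hx
        rw [min_def, max_def] at hx
        simp only [if_pos (zero_le_one (α := ℝ))] at hx
        exact (myF_deriv n hx).neg)
      (by
        intro x hx
        rw [min_def, max_def] at hx
        simp only [if_pos (zero_le_one (α := ℝ))] at hx
        have h1 : Real.log x ≤ 0 := Real.log_nonpos hx.1.le hx.2.le
        have h2 : (0:ℝ) ≤ x ^ n := pow_nonneg hx.1.le n
        simp only [neg_nonneg]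
        exact mul_nonpos_of_nonneg_of_nonpos h2 h1)
  have h2 := h.neg
  have : (-fun x : ℝ => -(x ^ n * Real.log x)) = fun x : ℝ => x ^ n * Real.log x := by
    funext x; simp
  rwa [this] at h2

lemma integral_pow_mul_log (n : ℕ) :
    ∫ x in (0:ℝ)..1, x ^ n * Real.log x = -(1 / ((n:ℝ)+1)^2) := by
  rw [intervalIntegral.integral_eq_sub_of_hasDeriv_right_of_le zero_le_one (myF_cont n)
      (fun x hx => (myF_deriv n hx).hasDerivWithinAt) (pow_mul_log_intInt n)]
  simp

lemma geom_hasSum {x : ℝ} (hx : x ∈ Set.Ioc (0:ℝ) 1) :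
    HasSum (fun k : ℕ => (x^(3*k) - x^(3*k+1)) * Real.log x) (Real.log x / (x^2+x+1)) := by
  rcases eq_or_lt_of_le hx.2 with h1 | h1
  · subst h1
    simp only [one_pow, sub_self, zero_mul, Real.log_one, zero_div]
    exact hasSum_zero
  · have h3 : |x^3| < 1 := by
      rw [abs_of_pos (pow_pos hx.1 3)]
      exact pow_lt_one₀ hx.1.le h1 three_ne_zero
    have hg := hasSum_geometric_of_abs_lt_one h3
    have hg2 := hg.mul_right ((1-x) * Real.log x)
    have hne : (1:ℝ) - x ≠ 0 := by linarith
    have hq : x^2 + x + 1 > 0 := by nlinarith [hx.1]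
    have hcube : (1:ℝ) - x^3 = (1-x) * (x^2+x+1) := by ring
    have hc3 : (1:ℝ) - x^3 ≠ 0 := by rw [hcube]; positivity
    have hfun : (fun k : ℕ => (x^(3*k) - x^(3*k+1)) * Real.log x)
        = fun k : ℕ => (x^3)^k * ((1-x)*Real.log x) := by
      funext k
      rw [pow_mul]
      ring
    have hval : (1-x^3)⁻¹ * ((1-x) * Real.log x) = Real.log x / (x^2+x+1) := by
      rw [hcube]
      field_simp
    rw [hfun, ← hval]
    exact hg2

lemma hasSum_integrals :
    HasSum (fun k : ℕ => 1/((3*(k:ℝ))+2)^2 - 1/((3*(k:ℝ))+1)^2)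
      (∫ x in (0:ℝ)..1, Real.log x / (x^2+x+1)) := by
  have hmeas : ∀ k : ℕ, AEStronglyMeasurable
      (fun x : ℝ => (x^(3*k) - x^(3*k+1)) * Real.log x) (volume.restrict (Set.Ioc 0 1)) := by
    intro k
    exact (((measurable_id.pow_const _).sub (measurable_id.pow_const _)).mul
      Real.measurable_log).aestronglyMeasurable
  have hterm_nonpos : ∀ x ∈ Set.Ioc (0:ℝ) 1, ∀ k : ℕ,
      (x^(3*k) - x^(3*k+1)) * Real.log x ≤ 0 := by
    intro x hx k
    have h1 : Real.log x ≤ 0 := Real.log_nonpos hx.1.le hx.2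
    have h2 : (0:ℝ) ≤ x^(3*k) - x^(3*k+1) := by
      rw [sub_nonneg]
      calc x^(3*k+1) = x^(3*k) * x := by ring
      _ ≤ x^(3*k) * 1 := by
          have := pow_nonneg hx.1.le (3*k)
          nlinarith [hx.2]
      _ = x^(3*k) := by ring
    exact mul_nonpos_of_nonneg_of_nonpos h2 h1
  have hbound : ∀ k : ℕ, ∀ᵐ x ∂(volume.restrict (Set.Ioc (0:ℝ) 1)),
      ‖(x^(3*k) - x^(3*k+1)) * Real.log x‖ ≤ -((x^(3*k) - x^(3*k+1)) * Real.log x) := by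
    intro k
    rw [ae_restrict_iff' measurableSet_Ioc]
    filter_upwards with x hx
    rw [Real.norm_eq_abs, abs_of_nonpos (hterm_nonpos x hx k)]
  have hsummable : ∀ᵐ x ∂(volume.restrict (Set.Ioc (0:ℝ) 1)),
      Summable (fun k : ℕ => -((x^(3*k) - x^(3*k+1)) * Real.log x)) := by
    rw [ae_restrict_iff' measurableSet_Ioc]
    filter_upwards with x hx
    exact ((geom_hasSum hx).neg).summable
  have hbind : Integrable (fun x : ℝ => ∑' k : ℕ, -((x^(3*k) - x^(3*k+1)) * Real.log x))
      (volume.restrict (Set.Ioc (0:ℝ) 1)) := by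
    have hcongr : ∀ᵐ x ∂(volume.restrict (Set.Ioc (0:ℝ) 1)),
        -(Real.log x / (x^2+x+1)) = ∑' k : ℕ, -((x^(3*k) - x^(3*k+1)) * Real.log x) := by
      rw [ae_restrict_iff' measurableSet_Ioc]
      filter_upwards with x hx
      exact ((geom_hasSum hx).neg).tsum_eq.symm
    refine Integrable.congr ?_ hcongr
    have hlogint : IntegrableOn (fun x : ℝ => Real.log x) (Set.Ioc 0 1) volume := by
      have h := (intervalIntegrable_iff_integrableOn_Ioc_of_le (zero_le_one (α := ℝ))).1
        (pow_mul_log_intInt 0)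
      simpa using h
    refine Integrable.mono' hlogint.neg ?_ ?_
    · exact ((Real.measurable_log.div
        (by fun_prop : Measurable fun x : ℝ => x^2+x+1)).neg).aestronglyMeasurable
    · rw [ae_restrict_iff' measurableSet_Ioc]
      filter_upwards with x hx
      have h1 : Real.log x ≤ 0 := Real.log_nonpos hx.1.le hx.2
      have hq : (1:ℝ) ≤ x^2 + x + 1 := by nlinarith [hx.1]
      have hq0 : (0:ℝ) < x^2 + x + 1 := by linarith
      have hle : Real.log x / (x^2+x+1) ≤ 0 := div_nonpos_of_nonpos_of_nonneg h1 hq0.le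
      rw [Real.norm_eq_abs, abs_of_nonneg (neg_nonneg.2 hle)]
      have hld : Real.log x ≤ Real.log x / (x^2+x+1) := by
        rw [le_div_iff₀ hq0]
        nlinarith
      simp only [Pi.neg_apply]
      linarith
  have hlim : ∀ᵐ x ∂(volume.restrict (Set.Ioc (0:ℝ) 1)),
      HasSum (fun k : ℕ => (x^(3*k) - x^(3*k+1)) * Real.log x) (Real.log x / (x^2+x+1)) := by
    rw [ae_restrict_iff' measurableSet_Ioc]
    filter_upwards with x hx
    exact geom_hasSum hx
  have H := MeasureTheory.hasSum_integral_of_dominated_convergence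
    (F := fun k (x : ℝ) => (x^(3*k) - x^(3*k+1)) * Real.log x)
    (f := fun x : ℝ => Real.log x / (x^2+x+1))
    (bound := fun k (x : ℝ) => -((x^(3*k) - x^(3*k+1)) * Real.log x))
    hmeas hbound hsummable hbind hlim
  have hint_eq : ∀ k : ℕ, (∫ x in Set.Ioc (0:ℝ) 1, (x^(3*k) - x^(3*k+1)) * Real.log x)
      = 1/((3*(k:ℝ))+2)^2 - 1/((3*(k:ℝ))+1)^2 := by
    intro k
    rw [← intervalIntegral.integral_of_le (zero_le_one (α := ℝ))]
    have hsplit : ∀ x : ℝ, (x^(3*k) - x^(3*k+1)) * Real.log x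
        = x^(3*k) * Real.log x - x^(3*k+1) * Real.log x := by intro x; ring
    rw [intervalIntegral.integral_congr (fun x _ => hsplit x)]
    rw [intervalIntegral.integral_sub (pow_mul_log_intInt (3*k)) (pow_mul_log_intInt (3*k+1))]
    rw [integral_pow_mul_log, integral_pow_mul_log]
    push_cast
    ring
  rw [← intervalIntegral.integral_of_le (zero_le_one (α := ℝ))] at H
  convert H using 2 with k
  · rfl
  exact (hint_eq k).symm

/-- The trigamma function `ψ'(x) = ∑_{k=0}^∞ 1/(x+k)²`. -/
noncomputable def trigamma (x : ℝ) : ℝ := ∑' k : ℕ, 1 / (x + k) ^ 2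

theorem stmt5 :
    ∫ x in (0:ℝ)..1, Real.log x / (x ^ 2 + x + 1) =
      4 * Real.pi ^ 2 / 27 - (2 / 9) * trigamma (1/3) := by
  set A : ℕ → ℝ := fun k => 1/(3*(k:ℝ)+1)^2 with hA_def
  set B : ℕ → ℝ := fun k => 1/(3*(k:ℝ)+2)^2 with hB_def
  -- summability of shifted zeta
  have hz : Summable (fun n : ℕ => 1/((n:ℝ)+1)^2) := by
    have h := (summable_nat_add_iff 1).2 hasSum_zeta_two.summable
    refine h.congr fun n => ?_
    push_cast
    ring
  have hA : Summable A := by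
    refine Summable.of_nonneg_of_le (fun k => by positivity) (fun k => ?_) hz
    have h1 : ((k:ℝ)+1) ≤ 3*(k:ℝ)+1 := by
      have : (0:ℝ) ≤ (k:ℝ) := Nat.cast_nonneg k
      linarith
    have h2 : (0:ℝ) < (k:ℝ)+1 := by positivity
    apply one_div_le_one_div_of_le (by positivity)
    exact pow_le_pow_left₀ h2.le h1 2
  have hB : Summable B := by
    refine Summable.of_nonneg_of_le (fun k => by positivity) (fun k => ?_) hz
    have h1 : ((k:ℝ)+1) ≤ 3*(k:ℝ)+2 := by
      have : (0:ℝ) ≤ (k:ℝ) := Nat.cast_nonneg k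
      linarith
    have h2 : (0:ℝ) < (k:ℝ)+1 := by positivity
    apply one_div_le_one_div_of_le (by positivity)
    exact pow_le_pow_left₀ h2.le h1 2
  -- splitting zeta(2) by residues mod 3
  have hsplit := (Nat.divModEquiv 3).symm.hasSum_iff.mpr hasSum_zeta_two
  have hQ : HasSum (fun q : ℕ => 1/(3*(q:ℝ))^2 + (A q + B q)) (π^2/6) := by
    refine hsplit.prod_fiberwise fun q => ?_
    have := hasSum_fintype (fun r : Fin 3 => (1:ℝ)/((Nat.divModEquiv 3).symm (q, r) : ℕ)^2)
    convert this using 1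
    · rfl
    rw [Fin.sum_univ_three]
    simp only [Nat.divModEquiv_symm_apply]
    push_cast
    norm_num
    ring
  have hC0 : HasSum (fun q : ℕ => 1/(3*(q:ℝ))^2) (π^2/54) := by
    have h := hasSum_zeta_two.mul_left (1/9 : ℝ)
    have heq : (fun q : ℕ => (1/9 : ℝ) * (1/(q:ℝ)^2)) = fun q : ℕ => 1/(3*(q:ℝ))^2 := by
      funext q
      rw [mul_pow]
      ring_nf
    rw [heq] at h
    convert h using 1
    · rfl
    ring
  have hAB : HasSum (fun q : ℕ => A q + B q) (4*π^2/27) := by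
    have h := hQ.sub hC0
    have heq : (fun q : ℕ => (1/(3*(q:ℝ))^2 + (A q + B q)) - 1/(3*(q:ℝ))^2)
        = fun q => A q + B q := by funext q; ring
    rw [heq] at h
    convert h using 1
    · rfl
    ring
  set a : ℝ := ∑' k, A k with ha_def
  have hA' : HasSum A a := hA.hasSum
  have hI : HasSum (fun k : ℕ => B k - A k) (4*π^2/27 - 2*a) := by
    have h := hAB.sub (hA'.mul_left 2)
    have heq : (fun q : ℕ => (A q + B q) - 2 * A q) = fun q => B q - A q := by
      funext q; ring
    rwa [heq] at h
  have hIval : (∫ x in (0:ℝ)..1, Real.log x / (x^2+x+1)) = 4*π^2/27 - 2*a :=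
    hasSum_integrals.unique hI
  have htri : trigamma (1/3) = 9 * a := by
    rw [trigamma, ha_def, ← tsum_mul_left]
    refine tsum_congr fun k => ?_
    have h1 : ((1:ℝ)/3 + k) ^ 2 = (3*(k:ℝ)+1)^2 / 9 := by ring
    rw [h1, hA_def]
    have h2 : (3*(k:ℝ)+1) ≠ 0 := by positivity
    field_simp
  rw [hIval, htri]
  ring
end

section
/- For -1 < a < 1, ∫₀¹ log(x)/(x²-2ax+1) dx = -∑_{k=0}^∞ U_k(a)/(k+1)². -/
open Real MeasureTheory Filter Set Topology Polynomial intervalIntegral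

-- bound on |log x|
lemma abs_log_le {x : ℝ} (hx0 : 0 < x) (hx1 : x ≤ 1) :
    |Real.log x| ≤ 2 * x ^ (-(2⁻¹:ℝ)) := by
  have hlog : Real.log x ≤ 0 := Real.log_nonpos hx0.le hx1
  rw [abs_of_nonpos hlog]
  have h1 : Real.log (x ^ (-(2⁻¹:ℝ))) ≤ x ^ (-(2⁻¹:ℝ)) - 1 :=
    Real.log_le_sub_one_of_pos (Real.rpow_pos_of_pos hx0 _)
  rw [Real.log_rpow hx0] at h1
  nlinarith [Real.rpow_pos_of_pos hx0 (-(2⁻¹:ℝ))]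

lemma II_pow_log (n : ℕ) :
    IntervalIntegrable (fun x => x ^ n * Real.log x) volume 0 1 := by
  have hg : IntervalIntegrable (fun x : ℝ => 2 * x ^ (-(2⁻¹:ℝ))) volume 0 1 :=
    (intervalIntegrable_rpow' (by norm_num)).const_mul 2
  refine hg.mono_fun ?_ ?_
  · exact ((measurable_id.pow_const n).mul Real.measurable_log).aestronglyMeasurable
  · rw [Set.uIoc_of_le (zero_le_one)]
    filter_upwards [ae_restrict_mem measurableSet_Ioc] with x hx
    have hx0 := hx.1
    have hx1 := hx.2
    have h1 : ‖x ^ n * Real.log x‖ ≤ |Real.log x| := by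
      rw [norm_mul, norm_pow]
      have : ‖x‖ ^ n ≤ 1 := by
        rw [Real.norm_eq_abs, abs_of_pos hx0]
        exact pow_le_one₀ hx0.le hx1
      calc ‖x‖ ^ n * ‖Real.log x‖ ≤ 1 * ‖Real.log x‖ := by
            exact mul_le_mul_of_nonneg_right this (norm_nonneg _)
        _ = |Real.log x| := by rw [one_mul, Real.norm_eq_abs]
    refine h1.trans ((abs_log_le hx0 hx1).trans ?_)
    rw [Real.norm_eq_abs]
    exact le_abs_self _

lemma integral_pow_log (n : ℕ) :
    ∫ x in (0:ℝ)..1, x ^ n * Real.log x = -(1 / ((n:ℝ) + 1) ^ 2) := by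
  have hn : ((n:ℝ) + 1) ≠ 0 := by positivity
  set f : ℝ → ℝ := fun x => x ^ (n+1) * Real.log x / ((n:ℝ)+1) - x ^ (n+1) / ((n:ℝ)+1)^2
    with hf
  have hderiv : ∀ x ∈ Set.Ioo (0:ℝ) 1, HasDerivAt f (x ^ n * Real.log x) x := by
    intro x hx
    have hx0 : x ≠ 0 := hx.1.ne'
    have h1 : HasDerivAt (fun x : ℝ => x ^ (n+1) * Real.log x)
        (((n:ℝ)+1) * x ^ n * Real.log x + x ^ (n+1) * x⁻¹) x := by
      have := (hasDerivAt_pow (n+1) x).mul (Real.hasDerivAt_log hx0)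
      refine this.congr_deriv ?_
      push_cast
      ring
    have h2 : HasDerivAt (fun x : ℝ => x ^ (n+1)) (((n:ℝ)+1) * x ^ n) x := by
      have := hasDerivAt_pow (n+1) x
      refine this.congr_deriv ?_; push_cast; ring
    have := (h1.div_const (((n:ℝ)+1))).sub (h2.div_const (((n:ℝ)+1)^2))
    refine this.congr_deriv ?_
    field_simp
    ring
  have h0 : Filter.Tendsto f (nhdsWithin 0 (Set.Ioi 0)) (nhds 0) := by
    have h1 : Filter.Tendsto (fun x : ℝ => x ^ (n+1) * Real.log x / ((n:ℝ)+1))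
        (nhdsWithin 0 (Set.Ioi 0)) (nhds 0) := by
      have h2 := (tendsto_log_mul_rpow_nhdsGT_zero (r := (n+1:ℝ)) (by positivity)).div_const
        (((n:ℝ)+1))
      rw [zero_div] at h2
      apply h2.congr'
      filter_upwards [self_mem_nhdsWithin] with x hx
      rw [show ((n:ℝ)+1) = ((n+1 : ℕ) : ℝ) by push_cast; ring, Real.rpow_natCast]
      ring
    have h3 : Filter.Tendsto (fun x : ℝ => x ^ (n+1) / ((n:ℝ)+1)^2)
        (nhdsWithin 0 (Set.Ioi 0)) (nhds 0) := by
      have : Continuous (fun x : ℝ => x ^ (n+1) / ((n:ℝ)+1)^2) := by continuity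
      have h4 := (this.tendsto 0).mono_left (nhdsWithin_le_nhds (s := Set.Ioi 0))
      simpa using h4
    simpa using h1.sub h3
  have h1 : Filter.Tendsto f (nhdsWithin 1 (Set.Iio 1)) (nhds (-(1 / ((n:ℝ) + 1) ^ 2))) := by
    have hc : ContinuousAt f 1 := by
      apply ContinuousAt.sub
      · exact ((continuousAt_pow _ _).mul (Real.continuousAt_log one_ne_zero)).div_const _
      · exact (continuousAt_pow _ _).div_const _
    have : f 1 = -(1 / ((n:ℝ) + 1) ^ 2) := by simp [hf]
    rw [← this]
    exact hc.tendsto.mono_left nhdsWithin_le_nhds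
  have := intervalIntegral.integral_eq_sub_of_hasDerivAt_of_tendsto zero_lt_one hderiv
    (II_pow_log n) h0 h1
  rw [this]; ring

lemma U_bound {a : ℝ} (ha : -1 < a) (ha' : a < 1) (k : ℤ) :
    |(Polynomial.Chebyshev.U ℝ k).eval a| ≤ (Real.sqrt (1 - a ^ 2))⁻¹ := by
  have h1 : (0:ℝ) < 1 - a ^ 2 := by nlinarith
  have hs : 0 < Real.sqrt (1 - a ^ 2) := Real.sqrt_pos.2 h1
  have hcos : Real.cos (Real.arccos a) = a := Real.cos_arccos ha.le ha'.le
  have hsin : Real.sin (Real.arccos a) = Real.sqrt (1 - a ^ 2) := by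
    rw [Real.sin_arccos]
  have := Polynomial.Chebyshev.U_real_cos (Real.arccos a) k
  rw [hcos, hsin] at this
  have h2 : |(Polynomial.Chebyshev.U ℝ k).eval a| * Real.sqrt (1 - a ^ 2) ≤ 1 := by
    rw [← abs_of_pos hs, ← abs_mul, this]
    exact Real.abs_sin_le_one _
  calc |(Polynomial.Chebyshev.U ℝ k).eval a|
      = |(Polynomial.Chebyshev.U ℝ k).eval a| * Real.sqrt (1 - a ^ 2) * (Real.sqrt (1 - a ^ 2))⁻¹ := by
        field_simp
    _ ≤ 1 * (Real.sqrt (1 - a ^ 2))⁻¹ := by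
        exact mul_le_mul_of_nonneg_right h2 (by positivity)
    _ = (Real.sqrt (1 - a ^ 2))⁻¹ := one_mul _

lemma partial_sum_id (a x : ℝ) (n : ℕ) :
    (x ^ 2 - 2 * a * x + 1) * ∑ k ∈ Finset.range n, (Polynomial.Chebyshev.U ℝ k).eval a * x ^ k
      = 1 - (Polynomial.Chebyshev.U ℝ n).eval a * x ^ n
        + (Polynomial.Chebyshev.U ℝ ((n:ℤ) - 1)).eval a * x ^ (n + 1) := by
  induction n with
  | zero => simp [Polynomial.Chebyshev.U_zero, Polynomial.Chebyshev.U_neg_one]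
  | succ n ih =>
    have hrec : (Polynomial.Chebyshev.U ℝ ((n:ℤ) + 1)).eval a
        = 2 * a * (Polynomial.Chebyshev.U ℝ (n:ℤ)).eval a
          - (Polynomial.Chebyshev.U ℝ ((n:ℤ) - 1)).eval a := by
      have := Polynomial.Chebyshev.U_add_two ℝ ((n:ℤ) - 1)
      have h2 : ((n:ℤ) - 1) + 2 = (n:ℤ) + 1 := by ring
      rw [h2] at this
      have h3 : ((n:ℤ) - 1) + 1 = (n:ℤ) := by ring
      rw [h3] at this
      have := congrArg (Polynomial.eval a) this
      simpa using this
    rw [Finset.sum_range_succ, mul_add, ih]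
    push_cast
    rw [hrec]
    ring

lemma denom_pos {a : ℝ} (ha : -1 < a) (ha' : a < 1) (x : ℝ) :
    0 < x ^ 2 - 2 * a * x + 1 := by nlinarith [sq_nonneg (x - a)]

lemma summable_U {a x : ℝ} (ha : -1 < a) (ha' : a < 1) (hx0 : 0 ≤ x) (hx1 : x < 1) :
    Summable (fun k : ℕ => (Polynomial.Chebyshev.U ℝ k).eval a * x ^ k) := by
  apply Summable.of_norm_bounded (g := fun k : ℕ => (Real.sqrt (1 - a ^ 2))⁻¹ * x ^ k)
    ((summable_geometric_of_lt_one hx0 hx1).mul_left _)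
  intro k
  rw [norm_mul, Real.norm_eq_abs, Real.norm_eq_abs, abs_of_nonneg (pow_nonneg hx0 k)]
  exact mul_le_mul_of_nonneg_right (U_bound ha ha' k) (pow_nonneg hx0 k)

lemma hasSum_U {a x : ℝ} (ha : -1 < a) (ha' : a < 1) (hx0 : 0 ≤ x) (hx1 : x < 1) :
    HasSum (fun k : ℕ => (Polynomial.Chebyshev.U ℝ k).eval a * x ^ k)
      (1 / (x ^ 2 - 2 * a * x + 1)) := by
  have hsum := summable_U ha ha' hx0 hx1
  have hd := denom_pos ha ha' x
  obtain ⟨S, hS⟩ := hsum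
  have htend := hS.tendsto_sum_nat
  have hzero : Filter.Tendsto (fun n : ℕ => (Polynomial.Chebyshev.U ℝ (n:ℤ)).eval a * x ^ n)
      Filter.atTop (nhds 0) := by
    apply squeeze_zero_norm (a := fun n => (Real.sqrt (1 - a ^ 2))⁻¹ * x ^ n)
    · intro n
      rw [norm_mul, Real.norm_eq_abs, Real.norm_eq_abs, abs_of_nonneg (pow_nonneg hx0 n)]
      exact mul_le_mul_of_nonneg_right (U_bound ha ha' n) (pow_nonneg hx0 n)
    · simpa using (tendsto_pow_atTop_nhds_zero_of_lt_one hx0 hx1).const_mul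
        ((Real.sqrt (1 - a ^ 2))⁻¹)
  have hzero' : Filter.Tendsto
      (fun n : ℕ => (Polynomial.Chebyshev.U ℝ ((n:ℤ) - 1)).eval a * x ^ (n + 1))
      Filter.atTop (nhds 0) := by
    apply squeeze_zero_norm (a := fun n => (Real.sqrt (1 - a ^ 2))⁻¹ * x ^ n)
    · intro n
      rw [norm_mul, Real.norm_eq_abs, Real.norm_eq_abs, abs_of_nonneg (pow_nonneg hx0 _)]
      calc |(Polynomial.Chebyshev.U ℝ ((n:ℤ)-1)).eval a| * x ^ (n+1)
          ≤ (Real.sqrt (1 - a ^ 2))⁻¹ * x ^ (n+1) :=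
            mul_le_mul_of_nonneg_right (U_bound ha ha' _) (pow_nonneg hx0 _)
        _ ≤ (Real.sqrt (1 - a ^ 2))⁻¹ * x ^ n := by
            apply mul_le_mul_of_nonneg_left _ (by positivity)
            exact pow_le_pow_of_le_one hx0 hx1.le (Nat.le_succ n)
    · simpa using (tendsto_pow_atTop_nhds_zero_of_lt_one hx0 hx1).const_mul
        ((Real.sqrt (1 - a ^ 2))⁻¹)
  -- limit of the partial sum identity
  have key : Filter.Tendsto
      (fun n : ℕ => (x ^ 2 - 2 * a * x + 1) *
        ∑ k ∈ Finset.range n, (Polynomial.Chebyshev.U ℝ k).eval a * x ^ k)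
      Filter.atTop (nhds 1) := by
    simp only [partial_sum_id a x]
    have := ((tendsto_const_nhds (x := (1:ℝ)) (f := Filter.atTop (α := ℕ))).sub hzero).add hzero'
    simpa using this
  have key2 : Filter.Tendsto
      (fun n : ℕ => (x ^ 2 - 2 * a * x + 1) *
        ∑ k ∈ Finset.range n, (Polynomial.Chebyshev.U ℝ k).eval a * x ^ k)
      Filter.atTop (nhds ((x ^ 2 - 2 * a * x + 1) * S)) := htend.const_mul _
  have hSeq : (x ^ 2 - 2 * a * x + 1) * S = 1 := tendsto_nhds_unique key2 key
  have : S = 1 / (x ^ 2 - 2 * a * x + 1) := by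
    rw [eq_div_iff hd.ne', mul_comm]
    exact hSeq
  rwa [← this]

theorem stmt9 (a : ℝ) (ha : -1 < a) (ha' : a < 1) :
    ∫ x in (0:ℝ)..1, Real.log x / (x ^ 2 - 2 * a * x + 1) =
      -∑' k : ℕ, (Polynomial.Chebyshev.U ℝ k).eval a / ((k : ℝ) + 1) ^ 2 := by
  set M := (Real.sqrt (1 - a ^ 2))⁻¹ with hM
  set F : ℕ → ℝ → ℝ := fun k x => (Polynomial.Chebyshev.U ℝ k).eval a * (x ^ k * Real.log x)
    with hF
  have hFint : ∀ k : ℕ, IntegrableOn (F k) (Set.Ioc 0 1) volume := fun k =>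
    (intervalIntegrable_iff_integrableOn_Ioc_of_le zero_le_one).1 ((II_pow_log k).const_mul _)
  have hI : ∀ k : ℕ, ∫ x in Set.Ioc (0:ℝ) 1, x ^ k * Real.log x = -(1/((k:ℝ)+1)^2) := by
    intro k
    rw [← intervalIntegral.integral_of_le zero_le_one]
    exact integral_pow_log k
  have hFI : ∀ k : ℕ, ∫ x in Set.Ioc (0:ℝ) 1, F k x
      = (Polynomial.Chebyshev.U ℝ k).eval a * (-(1/((k:ℝ)+1)^2)) := by
    intro k
    rw [hF]
    rw [MeasureTheory.integral_const_mul, hI k]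
  have hnorm : ∀ k : ℕ, ∫ x in Set.Ioc (0:ℝ) 1, ‖F k x‖
      = |(Polynomial.Chebyshev.U ℝ k).eval a| * (1/((k:ℝ)+1)^2) := by
    intro k
    have heq : ∀ x ∈ Set.Ioc (0:ℝ) 1, ‖F k x‖
        = |(Polynomial.Chebyshev.U ℝ k).eval a| * (-(x ^ k * Real.log x)) := by
      intro x hx
      have h1 : Real.log x ≤ 0 := Real.log_nonpos hx.1.le hx.2
      have h2 : (0:ℝ) ≤ x ^ k := pow_nonneg hx.1.le k
      rw [hF]
      simp only [Real.norm_eq_abs, abs_mul]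
      rw [abs_of_nonneg h2, abs_of_nonpos h1]
      ring
    rw [MeasureTheory.setIntegral_congr_fun measurableSet_Ioc heq,
      MeasureTheory.integral_const_mul, MeasureTheory.integral_neg, hI k]
    ring
  have hbase : Summable (fun k : ℕ => 1/((k:ℝ)+1)^2) := by
    have h1 : Summable (fun n : ℕ => 1/(n:ℝ)^2) :=
      Real.summable_one_div_nat_pow.2 one_lt_two
    have := (summable_nat_add_iff 1).2 h1
    apply this.congr
    intro k
    push_cast
    ring
  have hsum : Summable (fun k : ℕ => ∫ x in Set.Ioc (0:ℝ) 1, ‖F k x‖) := by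
    apply Summable.of_nonneg_of_le
      (fun k => MeasureTheory.integral_nonneg (fun x => norm_nonneg _))
      (fun k => ?_) (hbase.mul_left M)
    rw [hnorm k]
    exact mul_le_mul_of_nonneg_right (U_bound ha ha' k) (by positivity)
  rw [intervalIntegral.integral_of_le zero_le_one]
  have heq2 : ∫ x in Set.Ioc (0:ℝ) 1, Real.log x / (x ^ 2 - 2 * a * x + 1)
      = ∫ x in Set.Ioc (0:ℝ) 1, ∑' k : ℕ, F k x := by
    apply MeasureTheory.setIntegral_congr_fun measurableSet_Ioc
    intro x hx
    rcases eq_or_lt_of_le hx.2 with h1 | h1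
    · show Real.log x / (x ^ 2 - 2 * a * x + 1) = ∑' k : ℕ, F k x
      simp [hF, h1, Real.log_one]
    · have hs := hasSum_U ha ha' hx.1.le h1
      have h3 : ∑' k : ℕ, F k x
          = (∑' k : ℕ, (Polynomial.Chebyshev.U ℝ k).eval a * x ^ k) * Real.log x := by
        rw [← tsum_mul_right]
        apply tsum_congr
        intro k
        rw [hF]; ring
      show Real.log x / (x ^ 2 - 2 * a * x + 1) = ∑' k : ℕ, F k x
      rw [h3, hs.tsum_eq]
      field_simp
  rw [heq2, ← MeasureTheory.integral_tsum_of_summable_integral_norm hFint hsum]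
  rw [← tsum_neg]
  apply tsum_congr
  intro k
  rw [hFI k]
  ring
end
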